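/- Let n be a positive integer, let λ, μ, λ', μ' be nonzero complex numbers, and let δ and δ' be the ℂ-algebra automorphisms of K = ℂ(x,y) determined by δ(x) = λx, δ(y) = μy and δ'(x) = λ'x, δ'(y) = μ'y. If δ and δ' both have order n in the automorphism group Aut_ℂ(K), then δ and δ' are conjugate in Aut_ℂ(K): there exists χ ∈ Aut_ℂ(K) with χ ∘ δ ∘ χ⁻¹ = δ'. -/

import Mathlib

set_option maxHeartbeats 1000000
set_option synthInstance.maxHeartbeats 400000

noncomputable section
open MvPolynomial

/-- `K = ℂ(x,y)`, the field of rational functions in two variables over `ℂ`. -/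
abbrev K : Type := FractionRing (MvPolynomial (Fin 2) ℂ)

/-- The generator `x` of `K = ℂ(x,y)`. -/
def Kx : K := algebraMap (MvPolynomial (Fin 2) ℂ) K (X 0)

/-- The generator `y` of `K = ℂ(x,y)`. -/
def Ky : K := algebraMap (MvPolynomial (Fin 2) ℂ) K (X 1)

abbrev R2 : Type := MvPolynomial (Fin 2) ℂ

lemma Kx_ne_zero : Kx ≠ 0 := by
  intro h
  exact X_ne_zero (0 : Fin 2) (IsFractionRing.injective R2 K (by simpa [Kx] using h))

lemma Ky_ne_zero : Ky ≠ 0 := by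
  intro h
  exact X_ne_zero (1 : Fin 2) (IsFractionRing.injective R2 K (by simpa [Ky] using h))

/-- ℂ-algebra homs on K are determined by values on Kx, Ky. -/
lemma KalgHom_ext {f g : K →ₐ[ℂ] K} (hx : f Kx = g Kx) (hy : f Ky = g Ky) : f = g := by
  have h1 : f.comp (IsScalarTower.toAlgHom ℂ R2 K) = g.comp (IsScalarTower.toAlgHom ℂ R2 K) := by
    apply MvPolynomial.algHom_ext
    intro i
    fin_cases i
    · simpa [Kx] using hx
    · simpa [Ky] using hy
  have h2 : (f : K →+* K) = (g : K →+* K) := by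
    apply IsLocalization.ringHom_ext (nonZeroDivisors R2)
    refine RingHom.ext fun z => ?_
    simpa using AlgHom.congr_fun h1 z
  exact AlgHom.ext fun z => RingHom.congr_fun h2 z

lemma KalgEquiv_ext {f g : K ≃ₐ[ℂ] K} (hx : f Kx = g Kx) (hy : f Ky = g Ky) : f = g := by
  have := KalgHom_ext (f := f.toAlgHom) (g := g.toAlgHom) hx hy
  exact AlgEquiv.ext fun z => AlgHom.congr_fun this z

/-- Laurent monomial. -/
def KM (i j : ℤ) : K := Kx ^ i * Ky ^ j

lemma KM_mul (i j i' j' : ℤ) : KM i j * KM i' j' = KM (i + i') (j + j') := by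
  unfold KM
  rw [zpow_add₀ Kx_ne_zero, zpow_add₀ Ky_ne_zero]
  ring

lemma KM_zpow (i j k : ℤ) : KM i j ^ k = KM (i * k) (j * k) := by
  unfold KM
  rw [mul_zpow, ← zpow_mul, ← zpow_mul]

lemma KM_pow (i j : ℤ) (k : ℕ) : KM i j ^ k = KM (i * k) (j * k) := by
  rw [← zpow_natCast (KM i j) k, KM_zpow]

lemma KM_one_zero : KM 1 0 = Kx := by simp [KM]
lemma KM_zero_one : KM 0 1 = Ky := by simp [KM]

lemma algebraMap_monomial (a b : ℕ) (c : ℂ) :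
    algebraMap R2 K (monomial (Finsupp.single 0 a + Finsupp.single 1 b) c)
      = algebraMap ℂ K c * KM a b := by
  rw [monomial_eq, Finsupp.prod_fintype _ _ (fun i => pow_zero _), Fin.prod_univ_two]
  have e0 : ((Finsupp.single (0 : Fin 2) a + Finsupp.single 1 b : Fin 2 →₀ ℕ)) 0 = a := by
    simp [Finsupp.single_apply]
  have e1 : ((Finsupp.single (0 : Fin 2) a + Finsupp.single 1 b : Fin 2 →₀ ℕ)) 1 = b := by
    simp [Finsupp.single_apply]
  rw [e0, e1, map_mul, map_mul, map_pow, map_pow]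
  have hC : algebraMap R2 K (C c) = algebraMap ℂ K c := by
    rw [← MvPolynomial.algebraMap_eq, ← IsScalarTower.algebraMap_apply]
  rw [hC]
  unfold KM
  rw [zpow_natCast, zpow_natCast]
  rfl

/-- Linear independence of distinct Laurent monomials. -/
lemma KM_indep (s : Finset (Fin 2 →₀ ℕ)) (c : (Fin 2 →₀ ℕ) → ℂ) (E : (Fin 2 →₀ ℕ) → ℤ × ℤ)
    (hE : Set.InjOn E s)
    (h : ∑ m ∈ s, algebraMap ℂ K (c m) * KM (E m).1 (E m).2 = 0) :
    ∀ m ∈ s, c m = 0 := by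
  set N : ℤ := ∑ m ∈ s, (|(E m).1| + |(E m).2|) with hN
  have hNm : ∀ m ∈ s, 0 ≤ (E m).1 + N ∧ 0 ≤ (E m).2 + N := by
    intro m hm
    have h1 : |(E m).1| + |(E m).2| ≤ N :=
      Finset.single_le_sum (f := fun m => |(E m).1| + |(E m).2|) (fun i _ => by positivity) hm
    constructor
    · have := neg_abs_le (E m).1; have := abs_nonneg (E m).2; linarith
    · have := neg_abs_le (E m).2; have := abs_nonneg (E m).1; linarith
  set em : (Fin 2 →₀ ℕ) → (Fin 2 →₀ ℕ) := fun m =>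
    Finsupp.single 0 ((E m).1 + N).toNat + Finsupp.single 1 ((E m).2 + N).toNat with hem
  have hemInj : ∀ m ∈ s, ∀ m' ∈ s, em m = em m' → m = m' := by
    intro m hm m' hm' hmm
    have e0 : ((E m).1 + N).toNat = ((E m').1 + N).toNat := by
      have := DFunLike.congr_fun hmm (0 : Fin 2)
      simpa [hem, Finsupp.single_apply] using this
    have e1 : ((E m).2 + N).toNat = ((E m').2 + N).toNat := by
      have := DFunLike.congr_fun hmm (1 : Fin 2)
      simpa [hem, Finsupp.single_apply] using this
    have h1 := (hNm m hm).1; have h2 := (hNm m hm).2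
    have h3 := (hNm m' hm').1; have h4 := (hNm m' hm').2
    exact hE hm hm' (Prod.ext (by omega) (by omega))
  set F : R2 := ∑ m ∈ s, monomial (em m) (c m) with hF
  have key : algebraMap R2 K F = 0 := by
    have : algebraMap R2 K F
        = KM N N * ∑ m ∈ s, algebraMap ℂ K (c m) * KM (E m).1 (E m).2 := by
      rw [hF, map_sum (algebraMap R2 K) _ s, Finset.mul_sum]
      refine Finset.sum_congr rfl fun m hm => ?_
      rw [hem]
      rw [algebraMap_monomial]
      rw [Int.toNat_of_nonneg (hNm m hm).1, Int.toNat_of_nonneg (hNm m hm).2]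
      rw [mul_comm (KM N N) _, mul_assoc, KM_mul]
    rw [this, h, mul_zero]
  have hF0 : F = 0 := IsFractionRing.injective R2 K (by simpa using key)
  intro m hm
  have : coeff (em m) F = c m := by
    rw [hF, MvPolynomial.coeff_sum]
    rw [Finset.sum_eq_single_of_mem m hm]
    · simp [coeff_monomial]
    · intro m' hm' hne
      rw [coeff_monomial, if_neg]
      intro hcontra
      exact hne (hemInj m' hm' m hm hcontra)
  rw [hF0] at this
  simpa using this.symm

lemma aeval_eq_sum' (p q r s : ℤ) (f : R2) :
    (aeval ![KM p q, KM r s] : R2 →ₐ[ℂ] K) f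
    = ∑ m ∈ f.support, algebraMap ℂ K (coeff m f) * KM (p * m 0 + r * m 1) (q * m 0 + s * m 1) := by
  conv_lhs => rw [← support_sum_monomial_coeff f]
  rw [map_sum]
  refine Finset.sum_congr rfl fun m _ => ?_
  rw [aeval_monomial, Finsupp.prod_fintype _ _ (fun i => pow_zero _), Fin.prod_univ_two]
  simp only [Matrix.cons_val_zero, Matrix.cons_val_one, Matrix.head_cons]
  rw [KM_pow, KM_pow, KM_mul]

lemma subst_inj (p q r s : ℤ) (hdet : p * s - q * r = 1) :
    Function.Injective ((aeval ![KM p q, KM r s] : R2 →ₐ[ℂ] K)) := by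
  rw [injective_iff_map_eq_zero]
  intro f hf
  have hcoeff : ∀ m ∈ f.support, coeff m f = 0 := by
    refine KM_indep f.support (fun m => coeff m f)
      (fun m => (p * m 0 + r * m 1, q * m 0 + s * m 1)) ?_ ?_
    · intro m hm m' hm' hmm
      have h1 : p * (m 0 : ℤ) + r * m 1 = p * (m' 0 : ℤ) + r * m' 1 :=
        congrArg Prod.fst hmm
      have h2 : q * (m 0 : ℤ) + s * m 1 = q * (m' 0 : ℤ) + s * m' 1 :=
        congrArg Prod.snd hmm
      have e1 : (m 0 : ℤ) = m' 0 := by linear_combination s * h1 - r * h2 + ((m' 0 : ℤ) - m 0) * hdet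
      have e2 : (m 1 : ℤ) = m' 1 := by linear_combination p * h2 - q * h1 + ((m' 1 : ℤ) - m 1) * hdet
      ext i
      fin_cases i
      · exact_mod_cast e1
      · exact_mod_cast e2
    · rw [← aeval_eq_sum', hf]
  apply MvPolynomial.ext
  intro d
  by_cases hd : d ∈ f.support
  · exact hcoeff d hd
  · simpa using (MvPolynomial.notMem_support_iff.mp hd)

/-- The monomial substitution endomorphism of K. -/
def Phi (p q r s : ℤ) (hdet : p * s - q * r = 1) : K →ₐ[ℂ] K :=
  IsFractionRing.liftAlgHom (subst_inj p q r s hdet)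

lemma Phi_algebraMap (p q r s : ℤ) (hdet : p * s - q * r = 1) (f : R2) :
    Phi p q r s hdet (algebraMap R2 K f) = (aeval ![KM p q, KM r s] : R2 →ₐ[ℂ] K) f := by
  unfold Phi
  rw [IsFractionRing.liftAlgHom_apply, IsFractionRing.lift_algebraMap]
  rfl

lemma Phi_x (p q r s : ℤ) (hdet : p * s - q * r = 1) : Phi p q r s hdet Kx = KM p q := by
  rw [Kx, Phi_algebraMap]
  simp

lemma Phi_y (p q r s : ℤ) (hdet : p * s - q * r = 1) : Phi p q r s hdet Ky = KM r s := by
  rw [Ky, Phi_algebraMap]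
  simp

lemma Phi_KM (p q r s : ℤ) (hdet : p * s - q * r = 1) (i j : ℤ) :
    Phi p q r s hdet (KM i j) = KM (p * i + r * j) (q * i + s * j) := by
  rw [KM, map_mul, map_zpow₀, map_zpow₀, Phi_x, Phi_y, KM_zpow, KM_zpow, KM_mul]

/-- The monomial automorphism of K attached to a matrix of determinant 1. -/
def chi (p q r s : ℤ) (hdet : p * s - q * r = 1) : K ≃ₐ[ℂ] K :=
  AlgEquiv.ofAlgHom (Phi p q r s hdet)
    (Phi s (-q) (-r) p (by linear_combination hdet))
    (KalgHom_ext
      (by rw [AlgHom.comp_apply, Phi_x, Phi_KM, AlgHom.id_apply, ← KM_one_zero,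
            show p * s + r * -q = 1 by linear_combination hdet,
            show q * s + s * -q = 0 by ring])
      (by rw [AlgHom.comp_apply, Phi_y, Phi_KM, AlgHom.id_apply, ← KM_zero_one,
            show p * -r + r * p = 0 by ring,
            show q * -r + s * p = 1 by linear_combination hdet]))
    (KalgHom_ext
      (by rw [AlgHom.comp_apply, Phi_x, Phi_KM, AlgHom.id_apply, ← KM_one_zero,
            show s * p + -r * q = 1 by linear_combination hdet,
            show -q * p + p * q = 0 by ring])
      (by rw [AlgHom.comp_apply, Phi_y, Phi_KM, AlgHom.id_apply, ← KM_zero_one,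
            show s * r + -r * s = 0 by ring,
            show -q * r + p * s = 1 by linear_combination hdet]))

lemma chi_x (p q r s : ℤ) (hdet : p * s - q * r = 1) : chi p q r s hdet Kx = KM p q := by
  unfold chi
  exact Phi_x p q r s hdet

lemma chi_y (p q r s : ℤ) (hdet : p * s - q * r = 1) : chi p q r s hdet Ky = KM r s := by
  unfold chi
  exact Phi_y p q r s hdet

lemma red (n : ℕ) (hn : 1 < n) (a b : ℤ) (h : Int.gcd (Int.gcd a b : ℤ) (n : ℤ) = 1) :
    ∃ p q r s : ℤ, p * s - q * r = 1 ∧ a * p + b * r ≡ 1 [ZMOD (n : ℤ)] ∧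
      a * q + b * s ≡ 0 [ZMOD (n : ℤ)] := by
  have hg0 : Int.gcd a b ≠ 0 := by
    intro h0
    rw [h0] at h
    simp [Int.gcd] at h
    omega
  set g : ℤ := (Int.gcd a b : ℤ) with hgdef
  have hgne : g ≠ 0 := by rw [hgdef]; exact_mod_cast hg0
  have hgpos : 0 < Int.gcd a b := Nat.pos_of_ne_zero hg0
  obtain ⟨a₁, ha⟩ : ∃ a₁, a = g * a₁ := ⟨a / g, (Int.mul_ediv_cancel' (Int.gcd_dvd_left a b)).symm⟩
  obtain ⟨b₁, hb⟩ : ∃ b₁, b = g * b₁ := ⟨b / g, (Int.mul_ediv_cancel' (Int.gcd_dvd_right a b)).symm⟩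
  have ha₁ : a / g = a₁ := by rw [ha]; exact Int.mul_ediv_cancel_left _ hgne
  have hb₁ : b / g = b₁ := by rw [hb]; exact Int.mul_ediv_cancel_left _ hgne
  have hco : Int.gcd a₁ b₁ = 1 := by
    rw [← ha₁, ← hb₁]
    exact Int.gcd_div_gcd_div_gcd hgpos
  set u := Int.gcdA a₁ b₁ with hu
  set v := Int.gcdB a₁ b₁ with hv
  have hbez : a₁ * u + b₁ * v = 1 := by
    have h2 := Int.gcd_eq_gcd_ab a₁ b₁
    rw [hco] at h2
    exact_mod_cast h2.symm
  set hh := Int.gcdA g n with hhh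
  set kk := Int.gcdB g n with hkk
  have hbez2 : g * hh + n * kk = 1 := by
    have h2 := Int.gcd_eq_gcd_ab g (n : ℤ)
    rw [h] at h2
    exact_mod_cast h2.symm
  refine ⟨u * hh - b₁, u * (g * hh - 1) - b₁ * g, v * hh + a₁, v * (g * hh - 1) + a₁ * g,
    ?_, ?_, ?_⟩
  · linear_combination hbez
  · have : ((n : ℤ)) ∣ 1 - (a * (u * hh - b₁) + b * (v * hh + a₁)) := by
      refine ⟨kk, ?_⟩
      rw [ha, hb]
      linear_combination (-(g * hh)) * hbez - hbez2
    exact Int.modEq_iff_dvd.mpr this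
  · have : ((n : ℤ)) ∣ 0 - (a * (u * (g * hh - 1) - b₁ * g) + b * (v * (g * hh - 1) + a₁ * g)) := by
      refine ⟨g * kk, ?_⟩
      rw [ha, hb]
      linear_combination (-(g * (g * hh - 1))) * hbez - g * hbez2
    exact Int.modEq_iff_dvd.mpr this

lemma pow_apply_gen (δ : K ≃ₐ[ℂ] K) (c : ℂ) (z : K) (hz : δ z = algebraMap ℂ K c * z)
    (k : ℕ) : (δ ^ k) z = algebraMap ℂ K (c ^ k) * z := by
  induction k with
  | zero => simp
  | succ k ih =>
    rw [pow_succ, AlgEquiv.mul_apply, hz, map_mul, AlgEquiv.commutes, ih, pow_succ, map_mul]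
    ring

lemma scalar_pow_eq_one {δ : K ≃ₐ[ℂ] K} {c : ℂ} {z : K} (hz0 : z ≠ 0)
    (hz : δ z = algebraMap ℂ K c * z) {k : ℕ} (hk : δ ^ k = 1) : c ^ k = 1 := by
  have h1 := pow_apply_gen δ c z hz k
  rw [hk, AlgEquiv.one_apply] at h1
  have h2 : algebraMap ℂ K (c ^ k) * z = 1 * z := by rw [one_mul, ← h1]
  have h3 := mul_right_cancel₀ hz0 h2
  exact (algebraMap ℂ K).injective (by simpa using h3)

lemma order_gcd {n : ℕ} (hn : 0 < n) {δ : K ≃ₐ[ℂ] K} {c d : ℂ}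
    (hx : δ Kx = algebraMap ℂ K c * Kx) (hy : δ Ky = algebraMap ℂ K d * Ky)
    (hord : orderOf δ = n) {a b : ℕ} {ζ : ℂ} (hζ : IsPrimitiveRoot ζ n)
    (ha : ζ ^ a = c) (hb : ζ ^ b = d) : Nat.gcd (Nat.gcd a b) n = 1 := by
  set dn := Nat.gcd (Nat.gcd a b) n with hdn
  have hdn_n : dn ∣ n := Nat.gcd_dvd_right _ _
  have hdn_a : dn ∣ a := Nat.dvd_trans (Nat.gcd_dvd_left _ n) (Nat.gcd_dvd_left a b)
  have hdn_b : dn ∣ b := Nat.dvd_trans (Nat.gcd_dvd_left _ n) (Nat.gcd_dvd_right a b)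
  have h3 : dn * (n / dn) = n := Nat.mul_div_cancel' hdn_n
  have hpow : δ ^ (n / dn) = 1 := by
    apply KalgEquiv_ext
    · rw [pow_apply_gen δ c Kx hx, AlgEquiv.one_apply, ← ha, ← pow_mul]
      obtain ⟨a₂, ha₂⟩ := hdn_a
      have hdvd : n ∣ a * (n / dn) := by
        refine ⟨a₂, ?_⟩
        calc a * (n / dn) = a₂ * (dn * (n / dn)) := by rw [ha₂]; ring
        _ = n * a₂ := by rw [h3]; ring
      rw [(hζ.pow_eq_one_iff_dvd _).mpr hdvd, map_one, one_mul]
    · rw [pow_apply_gen δ d Ky hy, AlgEquiv.one_apply, ← hb, ← pow_mul]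
      obtain ⟨b₂, hb₂⟩ := hdn_b
      have hdvd : n ∣ b * (n / dn) := by
        refine ⟨b₂, ?_⟩
        calc b * (n / dn) = b₂ * (dn * (n / dn)) := by rw [hb₂]; ring
        _ = n * b₂ := by rw [h3]; ring
      rw [(hζ.pow_eq_one_iff_dvd _).mpr hdvd, map_one, one_mul]
  have h4 : n ∣ n / dn := by
    have := orderOf_dvd_of_pow_eq_one hpow
    rwa [hord] at this
  have h5 : n / dn ∣ n := Nat.div_dvd_of_dvd hdn_n
  have h6 : n / dn = n := Nat.dvd_antisymm h5 h4
  rcases Nat.div_eq_self.mp h6 with h | h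
  · omega
  · exact h

lemma zpow_modeq {n : ℕ} (hn : n ≠ 0) {ζ : ℂ} (hζ : IsPrimitiveRoot ζ n) {X Y : ℤ}
    (h : X ≡ Y [ZMOD (n : ℤ)]) : ζ ^ X = ζ ^ Y := by
  have hζ0 : ζ ≠ 0 := hζ.ne_zero hn
  have h1 : ζ ^ (Y - X) = 1 := (hζ.zpow_eq_one_iff_dvd _).mpr (Int.ModEq.dvd h)
  calc ζ ^ X = ζ ^ (Y - (Y - X)) := by congr 1; ring
  _ = ζ ^ Y / ζ ^ (Y - X) := by rw [zpow_sub₀ hζ0]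
  _ = ζ ^ Y := by rw [h1, div_one]

/-- Two diagonal automorphisms of `K = ℂ(x,y)` of the same finite order `n` are conjugate
in `Aut_ℂ(K)`. (In the automorphism group of `K`, multiplication is composition, so
`χ * δ * χ⁻¹` is the automorphism `χ ∘ δ ∘ χ⁻¹`.) -/
theorem diagonal_automorphisms_of_same_order_conjugate (n : ℕ) (hn : 0 < n)
    (lam mu lam' mu' : ℂ) (hlam : lam ≠ 0) (hmu : mu ≠ 0)
    (hlam' : lam' ≠ 0) (hmu' : mu' ≠ 0)
    (δ δ' : K ≃ₐ[ℂ] K)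
    (hδx : δ Kx = algebraMap ℂ K lam * Kx) (hδy : δ Ky = algebraMap ℂ K mu * Ky)
    (hδ'x : δ' Kx = algebraMap ℂ K lam' * Kx) (hδ'y : δ' Ky = algebraMap ℂ K mu' * Ky)
    (hord : orderOf δ = n) (hord' : orderOf δ' = n) :
    ∃ χ : K ≃ₐ[ℂ] K, χ * δ * χ⁻¹ = δ' := by
  rcases eq_or_ne n 1 with rfl | hn1
  · refine ⟨1, ?_⟩
    have h1 : δ = 1 := orderOf_eq_one_iff.mp hord
    have h2 : δ' = 1 := orderOf_eq_one_iff.mp hord'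
    rw [h1, h2]
    group
  have hn2 : 1 < n := by omega
  have hnz : n ≠ 0 := hn.ne'
  haveI : NeZero n := ⟨hnz⟩
  have hζ : IsPrimitiveRoot (Complex.exp (2 * Real.pi * Complex.I / n)) n :=
    Complex.isPrimitiveRoot_exp n hnz
  set ζ : ℂ := Complex.exp (2 * Real.pi * Complex.I / n) with hζdef
  have hζ0 : ζ ≠ 0 := hζ.ne_zero hnz
  have hδn : δ ^ n = 1 := by rw [← hord]; exact pow_orderOf_eq_one δ
  have hδ'n : δ' ^ n = 1 := by rw [← hord']; exact pow_orderOf_eq_one δ'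
  have hln : lam ^ n = 1 := scalar_pow_eq_one Kx_ne_zero hδx hδn
  have hmn : mu ^ n = 1 := scalar_pow_eq_one Ky_ne_zero hδy hδn
  have hln' : lam' ^ n = 1 := scalar_pow_eq_one Kx_ne_zero hδ'x hδ'n
  have hmn' : mu' ^ n = 1 := scalar_pow_eq_one Ky_ne_zero hδ'y hδ'n
  obtain ⟨a, -, ha⟩ := hζ.eq_pow_of_pow_eq_one hln
  obtain ⟨b, -, hb⟩ := hζ.eq_pow_of_pow_eq_one hmn
  obtain ⟨a', -, ha'⟩ := hζ.eq_pow_of_pow_eq_one hln'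
  obtain ⟨b', -, hb'⟩ := hζ.eq_pow_of_pow_eq_one hmn'
  have hg : Nat.gcd (Nat.gcd a b) n = 1 := order_gcd hn hδx hδy hord hζ ha hb
  have hg' : Nat.gcd (Nat.gcd a' b') n = 1 := order_gcd hn hδ'x hδ'y hord' hζ ha' hb'
  have hgz : Int.gcd (Int.gcd (a : ℤ) (b : ℤ) : ℤ) (n : ℤ) = 1 := by
    simpa [Int.gcd_natCast_natCast] using hg
  have hgz' : Int.gcd (Int.gcd (a' : ℤ) (b' : ℤ) : ℤ) (n : ℤ) = 1 := by
    simpa [Int.gcd_natCast_natCast] using hg'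
  obtain ⟨p, q, r, s, hdet, h1, h2⟩ := red n hn2 a b hgz
  obtain ⟨p', q', r', s', hdet', h1', h2'⟩ := red n hn2 a' b' hgz'
  set P := p' * s - q' * r with hP
  set Q := r' * s - s' * r with hQ
  set Rr := q' * p - p' * q with hR
  set S := s' * p - r' * q with hS
  have hdT : P * S - Q * Rr = 1 := by
    rw [hP, hQ, hR, hS]
    linear_combination (p * s - q * r) * hdet' + hdet
  have hA : (a' : ℤ) * P + (b' : ℤ) * Q ≡ (a : ℤ) [ZMOD (n : ℤ)] := by
    have e1 : (a' : ℤ) * P + (b' : ℤ) * Q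
        = s * ((a' : ℤ) * p' + (b' : ℤ) * r') - r * ((a' : ℤ) * q' + (b' : ℤ) * s') := by
      rw [hP, hQ]; ring
    have e2 : (a : ℤ) = s * 1 - r * 0 → True := fun _ => trivial
    rw [e1]
    have step1 : s * ((a' : ℤ) * p' + (b' : ℤ) * r') - r * ((a' : ℤ) * q' + (b' : ℤ) * s')
        ≡ s * 1 - r * 0 [ZMOD (n : ℤ)] := (h1'.mul_left s).sub (h2'.mul_left r)
    have step2 : s * ((a : ℤ) * p + (b : ℤ) * r) - r * ((a : ℤ) * q + (b : ℤ) * s)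
        ≡ s * 1 - r * 0 [ZMOD (n : ℤ)] := (h1.mul_left s).sub (h2.mul_left r)
    have e3 : (a : ℤ) = s * ((a : ℤ) * p + (b : ℤ) * r) - r * ((a : ℤ) * q + (b : ℤ) * s) := by
      linear_combination (-(a : ℤ)) * hdet
    rw [e3]
    exact step1.trans step2.symm
  have hB : (a' : ℤ) * Rr + (b' : ℤ) * S ≡ (b : ℤ) [ZMOD (n : ℤ)] := by
    have e1 : (a' : ℤ) * Rr + (b' : ℤ) * S
        = p * ((a' : ℤ) * q' + (b' : ℤ) * s') - q * ((a' : ℤ) * p' + (b' : ℤ) * r') := by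
      rw [hR, hS]; ring
    rw [e1]
    have step1 : p * ((a' : ℤ) * q' + (b' : ℤ) * s') - q * ((a' : ℤ) * p' + (b' : ℤ) * r')
        ≡ p * 0 - q * 1 [ZMOD (n : ℤ)] := (h2'.mul_left p).sub (h1'.mul_left q)
    have step2 : p * ((a : ℤ) * q + (b : ℤ) * s) - q * ((a : ℤ) * p + (b : ℤ) * r)
        ≡ p * 0 - q * 1 [ZMOD (n : ℤ)] := (h2.mul_left p).sub (h1.mul_left q)
    have e3 : (b : ℤ) = p * ((a : ℤ) * q + (b : ℤ) * s) - q * ((a : ℤ) * p + (b : ℤ) * r) := by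
      linear_combination (-(b : ℤ)) * hdet
    rw [e3]
    exact step1.trans step2.symm
  have hscalar1 : lam' ^ P * mu' ^ Q = lam := by
    rw [← ha, ← ha', ← hb', ← zpow_natCast ζ a', ← zpow_natCast ζ b', ← zpow_mul, ← zpow_mul,
      ← zpow_add₀ hζ0, ← zpow_natCast ζ a]
    exact zpow_modeq hnz hζ hA
  have hscalar2 : lam' ^ Rr * mu' ^ S = mu := by
    rw [← hb, ← ha', ← hb', ← zpow_natCast ζ a', ← zpow_natCast ζ b', ← zpow_mul, ← zpow_mul,
      ← zpow_add₀ hζ0, ← zpow_natCast ζ b]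
    exact zpow_modeq hnz hζ hB
  refine ⟨chi P Q Rr S hdT, ?_⟩
  have key : chi P Q Rr S hdT * δ = δ' * chi P Q Rr S hdT := by
    have hAH : (chi P Q Rr S hdT).toAlgHom.comp δ.toAlgHom
        = δ'.toAlgHom.comp (chi P Q Rr S hdT).toAlgHom := by
      apply KalgHom_ext
      · rw [AlgHom.comp_apply, AlgHom.comp_apply]
        show chi P Q Rr S hdT (δ Kx) = δ' (chi P Q Rr S hdT Kx)
        rw [hδx, map_mul, AlgEquiv.commutes, chi_x, KM, map_mul, map_zpow₀, map_zpow₀,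
          hδ'x, hδ'y, mul_zpow, mul_zpow, ← hscalar1, map_mul, map_zpow₀, map_zpow₀]
        ring
      · rw [AlgHom.comp_apply, AlgHom.comp_apply]
        show chi P Q Rr S hdT (δ Ky) = δ' (chi P Q Rr S hdT Ky)
        rw [hδy, map_mul, AlgEquiv.commutes, chi_y, KM, map_mul, map_zpow₀, map_zpow₀,
          hδ'x, hδ'y, mul_zpow, mul_zpow, ← hscalar2, map_mul, map_zpow₀, map_zpow₀]
        ring
    apply AlgEquiv.ext
    intro z
    simpa [AlgEquiv.mul_apply] using AlgHom.congr_fun hAH z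
  calc chi P Q Rr S hdT * δ * (chi P Q Rr S hdT)⁻¹
      = δ' * chi P Q Rr S hdT * (chi P Q Rr S hdT)⁻¹ := by rw [key]
  _ = δ' := by group

end
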